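/- Let T be a finite full binary tree labeled by instances, k-shattered by a hypothesis class H of size n (every branch is k-realizable by H), and let m_T be the minimum branch length. Then 2^{m_T} ≤ n·Σ_{j=0}^k C(m_T, j); consequently m_T ≤ D(n,k) where D(n,k) = max{d : 2^d ≤ n·Σ_{j=0}^k C(d,j)}. -/

import Mathlib

/-- Finite full rooted ordered binary trees with internal nodes labeled by `X`. -/
inductive BTree (X : Type) : Type
  | leaf : BTree X
  | node : X → BTree X → BTree X → BTree X

namespace BTree

variable {X : Type}

/-- The branches (root-to-leaf paths) of a tree, each recorded as the list of
edge labels (`false` = left/0, `true` = right/1) along the path. -/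
def branches : BTree X → List (List Bool)
  | leaf => [[]]
  | node _ l r => (branches l).map (List.cons false) ++ (branches r).map (List.cons true)

/-- The expected length of a uniformly random branch:
`E T = ∑_{b ∈ B(T)} |b| · 2^{-|b|}`. -/
noncomputable def E (t : BTree X) : ℝ :=
  ((branches t).map (fun b => (b.length : ℝ) * (2 : ℝ) ^ (-(b.length : ℤ)))).sum

/-- The internal-node positions of the tree, as paths from the root. -/
def nodePaths : BTree X → List (List Bool)
  | leaf => []
  | node _ l r =>
      [] :: ((nodePaths l).map (List.cons false) ++ (nodePaths r).map (List.cons true))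

/-- `w` is a weight function for `t`: at every internal node, the two outgoing
edges get nonnegative weights summing to `1`. -/
def IsWeightFn (t : BTree X) (w : List Bool → Bool → ℝ) : Prop :=
  ∀ p ∈ nodePaths t, 0 ≤ w p false ∧ 0 ≤ w p true ∧ w p false + w p true = 1

/-- The total weight of a branch `b`: the sum of the weights of its edges. -/
def branchWeight (w : List Bool → Bool → ℝ) (b : List Bool) : ℝ :=
  ((List.range b.length).map (fun i => w (b.take i) (b.getD i false))).sum

/-- The subtree of `t` rooted at the end of the path `p` (junk value `leaf`
if the path leaves the tree). -/
def subtreeAt : BTree X → List Bool → BTree X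
  | t, [] => t
  | leaf, _ :: _ => leaf
  | node _ l r, d :: p => subtreeAt (if d then r else l) p

/-- A tree is quasi-balanced if some weight function gives all branches the
same total weight `E T / 2`. -/
def QuasiBalanced (t : BTree X) : Prop :=
  ∃ w : List Bool → Bool → ℝ, IsWeightFn t w ∧ ∀ b ∈ branches t, branchWeight w b = E t / 2

/-- A tree is monotone if every subtree's expected branch length is at least
that of each of its immediate subtrees. -/
def IsMonotone : BTree X → Prop
  | leaf => True
  | node x l r =>
      E l ≤ E (node x l r) ∧ E r ≤ E (node x l r) ∧ IsMonotone l ∧ IsMonotone r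

/-- The minimum length of a branch of the tree. -/
def minBranch : BTree X → ℕ
  | leaf => 0
  | node _ l r => 1 + min (minBranch l) (minBranch r)

/-- The sequence of labeled examples along the path `p`: at a node labeled `x`,
following the edge labeled `d` produces the example `(x, d)`. -/
def examplesAlong : BTree X → List Bool → List (X × Bool)
  | leaf, _ => []
  | node _ _ _, [] => []
  | node x l r, d :: p => (x, d) :: examplesAlong (if d then r else l) p

end BTree

/-- `S` is `k`-realizable by `H`: some hypothesis in `H` errs on at most `k`
of the examples of `S`. -/
def KRealizable {X : Type} (H : Finset (X → Bool)) (k : ℕ) (S : List (X × Bool)) : Prop :=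
  ∃ h ∈ H, S.countP (fun e => h e.1 != e.2) ≤ k

/-- `T` is `k`-shattered by `H`: every branch of `T` is `k`-realizable. -/
def KShattered {X : Type} (H : Finset (X → Bool)) (k : ℕ) (T : BTree X) : Prop :=
  ∀ b ∈ BTree.branches T, KRealizable H k (BTree.examplesAlong T b)

/-- `D(n,k)`: the largest `d` with `2^d ≤ n · ∑_{j ≤ k} C(d,j)`. -/
noncomputable def Dnk (n k : ℕ) : ℕ :=
  sSup {d : ℕ | 2 ^ d ≤ n * ∑ j ∈ Finset.range (k + 1), Nat.choose d j}

section Aux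

open BTree

variable {X : Type}

lemma branches_ne_nil (t : BTree X) : t.branches ≠ [] := by
  induction t with
  | leaf => simp [branches]
  | node x l r ihl ihr =>
    cases hl : branches l with
    | nil => exact absurd hl ihl
    | cons b bs => simp [branches, hl]

lemma exists_prefix_branch (t : BTree X) :
    ∀ s : List Bool, s.length ≤ t.minBranch → ∃ b ∈ t.branches, s <+: b := by
  induction t with
  | leaf =>
    intro s hs
    have hs0 : s = [] := List.length_eq_zero_iff.mp (Nat.le_zero.mp hs)
    exact ⟨[], by simp [branches], by simp [hs0]⟩
  | node x l r ihl ihr =>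
    intro s hs
    cases s with
    | nil =>
      obtain ⟨b, hb⟩ := List.exists_mem_of_ne_nil _ (branches_ne_nil (node x l r))
      exact ⟨b, hb, List.nil_prefix⟩
    | cons d s' =>
      simp only [minBranch, List.length_cons] at hs
      cases d
      · obtain ⟨b, hb, hpre⟩ := ihl s' (by omega)
        refine ⟨false :: b, ?_, List.cons_prefix_cons.mpr ⟨rfl, hpre⟩⟩
        simp only [branches, List.mem_append, List.mem_map]
        exact Or.inl ⟨b, hb, rfl⟩
      · obtain ⟨b, hb, hpre⟩ := ihr s' (by omega)
        refine ⟨true :: b, ?_, List.cons_prefix_cons.mpr ⟨rfl, hpre⟩⟩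
        simp only [branches, List.mem_append, List.mem_map]
        exact Or.inr ⟨b, hb, rfl⟩

lemma examplesAlong_prefix (t : BTree X) :
    ∀ s b : List Bool, s <+: b → examplesAlong t s <+: examplesAlong t b := by
  induction t with
  | leaf => intro s b _; simp [examplesAlong]
  | node x l r ihl ihr =>
    intro s b hp
    cases s with
    | nil => exact List.nil_prefix
    | cons d s' =>
      obtain ⟨b', rfl, hp'⟩ : ∃ b', b = d :: b' ∧ s' <+: b' := by
        cases b with
        | nil => exact absurd hp (by simp)
        | cons e b' =>
          rw [List.cons_prefix_cons] at hp
          exact ⟨b', by rw [hp.1], hp.2⟩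
      simp only [examplesAlong]
      cases d
      · exact List.cons_prefix_cons.mpr ⟨rfl, by simpa using ihl s' b' hp'⟩
      · exact List.cons_prefix_cons.mpr ⟨rfl, by simpa using ihr s' b' hp'⟩

lemma length_examplesAlong (t : BTree X) :
    ∀ s : List Bool, s.length ≤ t.minBranch → (examplesAlong t s).length = s.length := by
  induction t with
  | leaf =>
    intro s hs
    have hs0 : s = [] := List.length_eq_zero_iff.mp (Nat.le_zero.mp hs)
    simp [hs0, examplesAlong]
  | node x l r ihl ihr =>
    intro s hs
    cases s with
    | nil => simp [examplesAlong]
    | cons d s' =>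
      simp only [minBranch, List.length_cons] at hs
      simp only [examplesAlong, List.length_cons]
      cases d
      · rw [show (if (false : Bool) = true then r else l) = l by simp, ihl s' (by omega)]
      · rw [show (if (true : Bool) = true then r else l) = r by simp, ihr s' (by omega)]

lemma reconstruct (t : BTree X) (h : X → Bool) :
    ∀ s₁ s₂ : List Bool, s₁.length = s₂.length → s₁.length ≤ t.minBranch →
      (examplesAlong t s₁).map (fun e => h e.1 != e.2) =
        (examplesAlong t s₂).map (fun e => h e.1 != e.2) → s₁ = s₂ := by
  induction t with
  | leaf =>
    intro s₁ s₂ hlen hle _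
    have h0 : s₁.length = 0 := Nat.le_zero.mp hle
    have h1 : s₁ = [] := List.length_eq_zero_iff.mp h0
    have h2 : s₂ = [] := List.length_eq_zero_iff.mp (by omega)
    rw [h1, h2]
  | node x l r ihl ihr =>
    intro s₁ s₂ hlen hle heq
    cases s₁ with
    | nil =>
      cases s₂ with
      | nil => rfl
      | cons d₂ s₂' => simp at hlen
    | cons d₁ s₁' =>
      cases s₂ with
      | nil => simp at hlen
      | cons d₂ s₂' =>
        simp only [examplesAlong, List.map_cons, List.cons.injEq] at heq
        have hd : d₁ = d₂ := by
          have h0 := heq.1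
          cases d₁ <;> cases d₂ <;> simp_all
        subst hd
        have hlen' : s₁'.length = s₂'.length := by simpa using hlen
        simp only [minBranch, List.length_cons] at hle
        cases d₁
        · have := ihl s₁' s₂' hlen' (by omega) (by simpa using heq.2)
          rw [this]
        · have := ihr s₁' s₂' hlen' (by omega) (by simpa using heq.2)
          rw [this]

lemma card_filter_getD (L : List Bool) :
    ((Finset.range L.length).filter (fun i => L.getD i false = true)).card = L.count true := by
  induction L with
  | nil => simp
  | cons a L ih =>
    rw [Finset.card_filter, List.length_cons, Finset.sum_range_succ']
    simp only [List.getD_cons_succ, List.getD_cons_zero]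
    rw [← Finset.card_filter, ih]
    cases a <;> simp [List.count_cons]

lemma count_true_map {α : Type} (f : α → Bool) (L : List α) :
    (L.map f).count true = L.countP f := by
  induction L with
  | nil => rfl
  | cons a L ih => cases h : f a <;> simp [List.count_cons, List.countP_cons, h, ih]

end Aux

/-- If `T` is `k`-shattered by a class `H` of size `n`, then
`2^{m_T} ≤ n · ∑_{j ≤ k} C(m_T, j)`; consequently `m_T ≤ D(n,k)`. -/
theorem kShattered_minBranch_le {X : Type} (H : Finset (X → Bool)) (k : ℕ)
    (T : BTree X) (hsh : KShattered H k T) :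
    2 ^ BTree.minBranch T ≤
        H.card * ∑ j ∈ Finset.range (k + 1), Nat.choose (BTree.minBranch T) j ∧
      BTree.minBranch T ≤ Dnk H.card k := by
  classical
  set m := T.minBranch with hm
  have hreal : ∀ s : List Bool, s.length = m → KRealizable H k (BTree.examplesAlong T s) := by
    intro s hs
    obtain ⟨b, hb, hpre⟩ := exists_prefix_branch T s hs.le
    obtain ⟨h, hH, hcnt⟩ := hsh b hb
    exact ⟨h, hH, le_trans (List.Sublist.countP_le (examplesAlong_prefix T s b hpre).sublist) hcnt⟩
  have key : 2 ^ m ≤ H.card * ∑ j ∈ Finset.range (k+1), Nat.choose m j := by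
    set s : (Fin m → Bool) → List Bool := fun v => List.ofFn v with hs_def
    have hslen : ∀ v, (s v).length = m := fun v => List.length_ofFn
    set hyp : (Fin m → Bool) → (X → Bool) := fun v => (hreal (s v) (hslen v)).choose with hhyp_def
    have hypmem : ∀ v, hyp v ∈ H := fun v => (hreal (s v) (hslen v)).choose_spec.1
    set errL : (Fin m → Bool) → List Bool :=
      fun v => (BTree.examplesAlong T (s v)).map (fun e => hyp v e.1 != e.2) with herrL_def
    have herrlen : ∀ v, (errL v).length = m := by
      intro v
      rw [herrL_def]
      simp only [List.length_map]
      rw [length_examplesAlong T (s v) (hslen v).le, hslen v]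
    have herrcnt : ∀ v, (errL v).count true ≤ k := by
      intro v
      rw [herrL_def]
      simp only
      rw [count_true_map]
      exact (hreal (s v) (hslen v)).choose_spec.2
    set Ev : (Fin m → Bool) → Finset ℕ :=
      fun v => (Finset.range m).filter (fun i => (errL v).getD i false = true) with hEv_def
    have hEcard : ∀ v, (Ev v).card ≤ k := by
      intro v
      have h0 := card_filter_getD (errL v)
      rw [herrlen v] at h0
      calc (Ev v).card = (errL v).count true := h0
        _ ≤ k := herrcnt v
    set B : Finset (Finset ℕ) :=
      (Finset.range (k+1)).biUnion (fun j => (Finset.range m).powersetCard j) with hB_def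
    have hmaps : ∀ v ∈ (Finset.univ : Finset (Fin m → Bool)), (hyp v, Ev v) ∈ H ×ˢ B := by
      intro v _
      refine Finset.mem_product.mpr ⟨hypmem v, ?_⟩
      refine Finset.mem_biUnion.mpr
        ⟨(Ev v).card, Finset.mem_range.mpr (Nat.lt_succ_of_le (hEcard v)), ?_⟩
      exact Finset.mem_powersetCard.mpr ⟨Finset.filter_subset _ _, rfl⟩
    have hinj : ∀ v₁ ∈ (Finset.univ : Finset (Fin m → Bool)),
        ∀ v₂ ∈ (Finset.univ : Finset (Fin m → Bool)),
        (hyp v₁, Ev v₁) = (hyp v₂, Ev v₂) → v₁ = v₂ := by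
      intro v₁ _ v₂ _ hvv
      have h1 : hyp v₁ = hyp v₂ := congrArg Prod.fst hvv
      have h2 : Ev v₁ = Ev v₂ := congrArg Prod.snd hvv
      have herr : errL v₁ = errL v₂ := by
        apply List.ext_getElem (by rw [herrlen, herrlen])
        intro i hi1 hi2
        have hi : i < m := by rwa [herrlen] at hi1
        have e1 : (errL v₁).getD i false = (errL v₁)[i] := List.getD_eq_getElem _ _ hi1
        have e2 : (errL v₂).getD i false = (errL v₂)[i] := List.getD_eq_getElem _ _ hi2
        have hiff : ((errL v₁).getD i false = true) ↔ ((errL v₂).getD i false = true) := by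
          constructor <;> intro hh
          · have hmem : i ∈ Ev v₁ := Finset.mem_filter.mpr ⟨Finset.mem_range.mpr hi, hh⟩
            rw [h2] at hmem
            exact (Finset.mem_filter.mp hmem).2
          · have hmem : i ∈ Ev v₂ := Finset.mem_filter.mpr ⟨Finset.mem_range.mpr hi, hh⟩
            rw [← h2] at hmem
            exact (Finset.mem_filter.mp hmem).2
        rw [← e1, ← e2]
        cases hb1 : (errL v₁).getD i false <;> cases hb2 : (errL v₂).getD i false <;> simp_all
      have hs12 : s v₁ = s v₂ := by
        apply reconstruct T (hyp v₁) (s v₁) (s v₂) (by rw [hslen, hslen])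
          ((hslen v₁).le) ?_
        have hr : (BTree.examplesAlong T (s v₂)).map (fun e => hyp v₁ e.1 != e.2) = errL v₂ := by
          rw [herrL_def, h1]
        rw [hr]
        exact herr
      exact List.ofFn_injective hs12
    have hcard := Finset.card_le_card_of_injOn (fun v => (hyp v, Ev v)) hmaps hinj
    have hdom : (Finset.univ : Finset (Fin m → Bool)).card = 2 ^ m := by
      rw [Finset.card_univ]
      simp
    have hBcard : B.card = ∑ j ∈ Finset.range (k+1), Nat.choose m j := by
      rw [hB_def, Finset.card_biUnion]
      · exact Finset.sum_congr rfl fun j _ => by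
          rw [Finset.card_powersetCard, Finset.card_range]
      · intro i _ j _ hij
        refine Finset.disjoint_left.mpr fun A hA hA' => hij ?_
        rw [← (Finset.mem_powersetCard.mp hA).2, ← (Finset.mem_powersetCard.mp hA').2]
    calc 2 ^ m = (Finset.univ : Finset (Fin m → Bool)).card := hdom.symm
      _ ≤ (H ×ˢ B).card := hcard
      _ = H.card * B.card := Finset.card_product _ _
      _ = H.card * ∑ j ∈ Finset.range (k+1), Nat.choose m j := by rw [hBcard]
  refine ⟨key, ?_⟩
  have hbdd : BddAbove {d : ℕ | 2 ^ d ≤ H.card * ∑ j ∈ Finset.range (k + 1), Nat.choose d j} := by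
    set n := H.card with hn
    set N : ℝ := (n : ℝ) * ((k : ℝ) + 1) + 1 with hN_def
    have hNpos : (0:ℝ) < N := by positivity
    have hlo := isLittleO_pow_const_const_pow_of_one_lt (R := ℝ) k
      (show (1:ℝ) < 2 by norm_num)
    have hev := hlo.def (show (0:ℝ) < 1 / N by positivity)
    rw [Filter.eventually_atTop] at hev
    obtain ⟨M, hM⟩ := hev
    refine ⟨max M 1, fun d hd => ?_⟩
    by_contra hlt
    push_neg at hlt
    have hd1 : 1 ≤ d := le_of_lt (lt_of_le_of_lt (le_max_right M 1) hlt)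
    have hMd : M ≤ d := le_of_lt (lt_of_le_of_lt (le_max_left M 1) hlt)
    have hsum : ∑ j ∈ Finset.range (k+1), Nat.choose d j ≤ (k+1) * d ^ k := by
      calc ∑ j ∈ Finset.range (k+1), Nat.choose d j
          ≤ ∑ _j ∈ Finset.range (k+1), d ^ k := by
            refine Finset.sum_le_sum fun j hj => ?_
            exact le_trans (Nat.choose_le_pow d j)
              (Nat.pow_le_pow_right hd1 (Nat.lt_succ_iff.mp (Finset.mem_range.mp hj)))
        _ = (k+1) * d ^ k := by rw [Finset.sum_const, Finset.card_range, smul_eq_mul]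
    have hdS : 2 ^ d ≤ n * ((k+1) * d ^ k) := le_trans hd (Nat.mul_le_mul_left n hsum)
    have hdSR : (2:ℝ) ^ d ≤ (n:ℝ) * (((k:ℝ)+1) * (d:ℝ) ^ k) := by
      have := hdS
      push_cast at this ⊢
      exact_mod_cast this
    have hnorm := hM d hMd
    rw [Real.norm_eq_abs, Real.norm_eq_abs, abs_of_nonneg (by positivity),
      abs_of_nonneg (by positivity)] at hnorm
    have h3 : N * ((d:ℝ) ^ k) ≤ 2 ^ d := by
      have h4 := mul_le_mul_of_nonneg_left hnorm hNpos.le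
      rwa [← mul_assoc, mul_one_div_cancel hNpos.ne', one_mul] at h4
    have hdk : (0:ℝ) < (d:ℝ) ^ k := by
      have : (1:ℝ) ≤ (d:ℝ) := by exact_mod_cast hd1
      positivity
    rw [hN_def] at h3
    nlinarith [hdSR, h3, hdk]
  exact le_csSup hbdd key
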